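/- Let n ≥ 2, δ ∈ (0, 1/n²], and for k ≥ 2 let there be at most C(n)(k!)^{n-1} balls of radius 2^{-k-2}(k!)^{-n} each, centered on the sphere of radius 1 - 2^{-k}. Let D be their union. Then for every z with |z| = 1, |D ∩ B(z,r)| / |B(z,r)| → 0 as r → 0⁺; consequently every boundary point of the unit sphere has Lebesgue density 0 for D. -/

import Mathlib

open MeasureTheory Metric Set Filter Nat

/-- `2 ^ k ≤ (k+1)!`. -/
lemma aux_two_pow_le_factorial_succ (k : ℕ) : 2 ^ k ≤ (k + 1)! := by
  induction k with
  | zero => simp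
  | succ k ih =>
      calc 2 ^ (k + 1) = 2 * 2 ^ k := by ring
        _ ≤ 2 * (k + 1)! := by omega
        _ ≤ (k + 2) * (k + 1)! := by
            have : (k + 1)! ≥ 1 := Nat.one_le_iff_ne_zero.2 (Nat.factorial_ne_zero _)
            nlinarith
        _ = (k + 2)! := (Nat.factorial_succ (k+1)).symm

theorem stmt6 (n : ℕ) (hn : 2 ≤ n) (δ : ℝ) (hδ : 0 < δ) (hδ' : δ ≤ 1 / (n : ℝ) ^ 2)
    (C : ℝ) (hC : 0 < C) (N : ℕ → ℕ)
    (hN : ∀ k : ℕ, (N k : ℝ) ≤ C * (k ! : ℝ) ^ (n - 1))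
    (c : (k : ℕ) → Fin (N k) → EuclideanSpace ℝ (Fin n))
    (hc : ∀ (k : ℕ) (i : Fin (N k)), 2 ≤ k → ‖c k i‖ = 1 - 2 ^ (-(k : ℤ)))
    (D : Set (EuclideanSpace ℝ (Fin n)))
    (hD : D = ⋃ k ∈ {k : ℕ | 2 ≤ k}, ⋃ i : Fin (N k),
      closedBall (c k i) ((2 : ℝ) ^ (-(k : ℤ) - 2) * (k ! : ℝ) ^ (-(n : ℤ)))) :
    ∀ z : EuclideanSpace ℝ (Fin n), ‖z‖ = 1 →
      Tendsto (fun r : ℝ => volume (D ∩ ball z r) / volume (ball z r))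
        (nhdsWithin 0 (Ioi 0)) (nhds 0) := by
  intro z hz
  have hfr : Module.finrank ℝ (EuclideanSpace ℝ (Fin n)) = n := finrank_euclideanSpace_fin
  haveI : Nontrivial (EuclideanSpace ℝ (Fin n)) :=
    Module.nontrivial_of_finrank_pos (R := ℝ) (by rw [hfr]; omega)
  set ρ : ℕ → ℝ := fun k => (2 : ℝ) ^ (-(k : ℤ) - 2) * (k ! : ℝ) ^ (-(n : ℤ)) with hρ
  have hρpos : ∀ k, 0 < ρ k := by
    intro k
    have h1 : (0:ℝ) < (k ! : ℝ) := by exact_mod_cast k.factorial_pos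
    positivity
  set ω := volume (ball (0 : EuclideanSpace ℝ (Fin n)) 1) with hω
  rw [ENNReal.tendsto_nhds_zero]
  intro ε hε
  -- choose m with ofReal (4C/m!) < ε
  have hten : Tendsto (fun m : ℕ => ENNReal.ofReal (4 * C / (m ! : ℝ))) atTop (nhds 0) := by
    have h1 : Tendsto (fun m : ℕ => ((m ! : ℕ) : ℝ)) atTop atTop :=
      tendsto_natCast_atTop_atTop.comp
        (tendsto_atTop_mono (fun m => Nat.self_le_factorial m) tendsto_id)
    have h2 : Tendsto (fun m : ℕ => 4 * C / (m ! : ℝ)) atTop (nhds 0) :=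
      Tendsto.div_atTop tendsto_const_nhds h1
    have h3 := ENNReal.tendsto_ofReal (a := 0) h2
    simpa using h3
  obtain ⟨m, hm⟩ : ∃ m : ℕ, ENNReal.ofReal (4 * C / (m ! : ℝ)) < ε :=
    (hten.eventually_lt_const hε).exists
  have hmfac : (0:ℝ) < (m ! : ℝ) := by exact_mod_cast m.factorial_pos
  filter_upwards [Ioc_mem_nhdsGT_of_mem
    (left_mem_Ico.mpr (by positivity : (0:ℝ) < 2 ^ (-(m:ℤ) - 1)))] with r hr
  obtain ⟨hr0, hrm⟩ := hr
  have key : volume (D ∩ ball z r)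
      ≤ ENNReal.ofReal (4 * C / (m ! : ℝ)) * volume (ball z r) := by
    -- Step 1: covering
    have hsub : D ∩ ball z r ⊆
        ⋃ k : ℕ, (if 2 ≤ k then ⋃ i : Fin (N k), closedBall (c k i) (ρ k) ∩ ball z r
          else (∅ : Set (EuclideanSpace ℝ (Fin n)))) := by
      rintro x ⟨hxD, hxB⟩
      rw [hD] at hxD
      simp only [mem_iUnion, mem_setOf_eq] at hxD
      obtain ⟨k, hk2, i, hxk⟩ := hxD
      refine mem_iUnion.2 ⟨k, ?_⟩
      rw [if_pos hk2]
      exact mem_iUnion.2 ⟨i, ⟨hxk, hxB⟩⟩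
    refine le_trans (le_trans (measure_mono hsub) (measure_iUnion_le _)) ?_
    -- Step 2: per-generation bound
    have hterm : ∀ k : ℕ,
        volume (if 2 ≤ k then ⋃ i : Fin (N k), closedBall (c k i) (ρ k) ∩ ball z r
          else (∅ : Set (EuclideanSpace ℝ (Fin n))))
        ≤ ENNReal.ofReal (2 * C * r ^ n / (m ! : ℝ) * (1 / 2) ^ k) * ω := by
      intro k
      by_cases hk2 : 2 ≤ k
      · rw [if_pos hk2]
        have hF1 : (1:ℝ) ≤ (k ! : ℝ) := by exact_mod_cast k.factorial_pos
        by_cases hkr : (2:ℝ) ^ (-(k:ℤ)) ≤ 2 * r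
        · -- relevant generation
          have hmk : m ≤ k := by
            by_contra hmk
            push_neg at hmk
            have h1 : (2:ℝ) ^ (-(k:ℤ)) ≤ 2 * (2 ^ (-(m:ℤ) - 1)) := le_trans hkr (by linarith)
            have h2 : (2:ℝ) * (2 ^ (-(m:ℤ) - 1)) = 2 ^ (-(m:ℤ)) := by
              rw [zpow_sub₀ (by norm_num : (2:ℝ) ≠ 0)]
              ring
            rw [h2] at h1
            have h3 : -(k:ℤ) ≤ -(m:ℤ) :=
              (zpow_le_zpow_iff_right₀ (by norm_num : (1:ℝ) < 2)).1 h1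
            omega
          calc volume (⋃ i : Fin (N k), closedBall (c k i) (ρ k) ∩ ball z r)
              ≤ ∑ i : Fin (N k), volume (closedBall (c k i) (ρ k)) := by
                refine le_trans (measure_iUnion_fintype_le _ _) ?_
                exact Finset.sum_le_sum fun i _ => measure_mono inter_subset_left
            _ = ∑ _i : Fin (N k), ENNReal.ofReal (ρ k ^ n) * ω := by
                refine Finset.sum_congr rfl fun i _ => ?_
                rw [Measure.addHaar_closedBall _ _ (hρpos k).le, hfr]
            _ = (N k : ENNReal) * (ENNReal.ofReal (ρ k ^ n) * ω) := by
                simp [Finset.sum_const, nsmul_eq_mul]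
            _ ≤ ENNReal.ofReal (2 * C * r ^ n / (m ! : ℝ) * (1 / 2) ^ k) * ω := by
                rw [← ENNReal.ofReal_natCast (N k), ← mul_assoc, ← ENNReal.ofReal_mul
                  (by positivity)]
                refine mul_le_mul_left (ENNReal.ofReal_le_ofReal ?_) ω
                -- the real inequality
                have hk1 : 1 ≤ k := by omega
                have h2pow : (2:ℝ) ^ (k - 1) * 2 = 2 ^ k := by
                  rw [← pow_succ]
                  congr 1
                  omega
                have hF2 : (2:ℝ) ^ (k - 1) ≤ (k ! : ℝ) := by
                  have := aux_two_pow_le_factorial_succ (k - 1)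
                  have hk' : k - 1 + 1 = k := by omega
                  rw [hk'] at this
                  exact_mod_cast this
                have hFm : (m ! : ℝ) ≤ (k ! : ℝ) := by
                  exact_mod_cast Nat.factorial_le hmk
                -- exponent bound on factorial powers
                have hfpow : (k ! : ℝ) ^ (n - 1) * ((k ! : ℝ) ^ (-(n:ℤ))) ^ n
                    ≤ 2 * (1 / 2) ^ k / (m ! : ℝ) := by
                  have e1 : (k ! : ℝ) ^ (n - 1) * ((k ! : ℝ) ^ (-(n:ℤ))) ^ n
                      = (k ! : ℝ) ^ (((n:ℤ) - 1) + (-(n:ℤ)) * n) := by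
                    rw [← zpow_natCast ((k ! : ℝ) ^ (-(n:ℤ))) n, ← zpow_mul,
                      ← zpow_natCast (k ! : ℝ) (n - 1),
                      ← zpow_add₀ (by positivity : (k ! : ℝ) ≠ 0)]
                    congr 2
                    push_cast [Nat.cast_sub (by omega : 1 ≤ n)]
                    ring
                  rw [e1]
                  have e2 : (k ! : ℝ) ^ (((n:ℤ) - 1) + (-(n:ℤ)) * n) ≤ (k ! : ℝ) ^ (-2 : ℤ) := by
                    refine zpow_le_zpow_right₀ hF1 ?_
                    have hn' : (2:ℤ) ≤ (n:ℤ) := by exact_mod_cast hn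
                    nlinarith
                  refine le_trans e2 ?_
                  have e3 : (k ! : ℝ) ^ (-2 : ℤ) = ((k ! : ℝ) * (k ! : ℝ))⁻¹ := by
                    rw [zpow_neg, zpow_two]
                  rw [e3]
                  have e4 : ((k ! : ℝ) * (k ! : ℝ))⁻¹ ≤ ((m ! : ℝ) * 2 ^ (k - 1))⁻¹ := by
                    apply inv_anti₀ (by positivity)
                    exact mul_le_mul hFm hF2 (by positivity) (by positivity)
                  refine le_trans e4 (le_of_eq ?_)
                  have h2k : (0:ℝ) < 2 ^ (k-1) := by positivity
                  field_simp
                  rw [h2pow, ← mul_pow]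
                  norm_num
                -- power of two bound
                have hpow2 : ((2:ℝ) ^ (-(k:ℤ) - 2)) ^ n ≤ r ^ n / 4 := by
                  have hb : (2:ℝ) ^ (-(k:ℤ) - 2) ≤ r / 2 := by
                    have : (2:ℝ) ^ (-(k:ℤ) - 2) = 2 ^ (-(k:ℤ)) / 4 := by
                      rw [zpow_sub₀ (by norm_num : (2:ℝ) ≠ 0)]
                      norm_num
                    rw [this]
                    linarith
                  calc ((2:ℝ) ^ (-(k:ℤ) - 2)) ^ n ≤ (r / 2) ^ n := by
                        exact pow_le_pow_left₀ (by positivity) hb n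
                    _ = r ^ n / 2 ^ n := by rw [div_pow]
                    _ ≤ r ^ n / 4 := by
                        apply div_le_div_of_nonneg_left (by positivity) (by norm_num)
                        calc (4:ℝ) = 2 ^ 2 := by norm_num
                          _ ≤ 2 ^ n := pow_le_pow_right₀ (by norm_num) hn
                have hρn : ρ k ^ n = ((2:ℝ) ^ (-(k:ℤ) - 2)) ^ n * ((k ! : ℝ) ^ (-(n:ℤ))) ^ n :=
                  mul_pow _ _ _
                calc (N k : ℝ) * ρ k ^ n
                    ≤ (C * (k ! : ℝ) ^ (n - 1)) *
                        (((2:ℝ) ^ (-(k:ℤ) - 2)) ^ n * ((k ! : ℝ) ^ (-(n:ℤ))) ^ n) := by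
                      rw [hρn]
                      apply mul_le_mul (hN k) le_rfl (by positivity)
                      have : (0:ℝ) < (k ! : ℝ) ^ (n-1) := by positivity
                      nlinarith
                  _ = (((2:ℝ) ^ (-(k:ℤ) - 2)) ^ n) *
                        (C * ((k ! : ℝ) ^ (n - 1) * ((k ! : ℝ) ^ (-(n:ℤ))) ^ n)) := by ring
                  _ ≤ (r ^ n / 4) * (C * (2 * (1 / 2) ^ k / (m ! : ℝ))) := by
                      apply mul_le_mul hpow2 _ _ (by positivity)
                      · exact mul_le_mul_of_nonneg_left hfpow hC.le
                      · positivity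
                  _ ≤ 2 * C * r ^ n / (m ! : ℝ) * (1 / 2) ^ k := by
                      have e5 : r ^ n / 4 * (C * (2 * (1 / 2) ^ k / (m ! : ℝ)))
                          = C * r ^ n * (1 / 2) ^ k / (m ! : ℝ) * (1 / 2) := by
                        field_simp
                        ring
                      have e6 : 2 * C * r ^ n / (m ! : ℝ) * (1 / 2) ^ k
                          = C * r ^ n * (1 / 2) ^ k / (m ! : ℝ) * 2 := by ring
                      rw [e5, e6]
                      have hpos : (0:ℝ) ≤ C * r ^ n * (1 / 2) ^ k / (m ! : ℝ) := by positivity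
                      linarith
        · -- irrelevant generation: empty intersection
          push_neg at hkr
          have hempty : (⋃ i : Fin (N k), closedBall (c k i) (ρ k) ∩ ball z r) = ∅ := by
            refine iUnion_eq_empty.2 fun i => ?_
            rw [eq_empty_iff_forall_notMem]
            rintro x ⟨hx1, hx2⟩
            have h1 : (2:ℝ) ^ (-(k:ℤ)) ≤ dist z (c k i) := by
              have hci := hc k i hk2
              calc (2:ℝ) ^ (-(k:ℤ)) = ‖z‖ - ‖c k i‖ := by rw [hz, hci]; ring
                _ ≤ ‖z - c k i‖ := norm_sub_norm_le _ _
                _ = dist z (c k i) := (dist_eq_norm _ _).symm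
            have h2 : dist z (c k i) ≤ r + ρ k := by
              calc dist z (c k i) ≤ dist z x + dist x (c k i) := dist_triangle _ _ _
                _ ≤ r + ρ k := by
                    have hzx : dist z x < r := mem_ball'.1 hx2
                    exact add_le_add hzx.le (mem_closedBall.1 hx1)
            have h3 : ρ k ≤ (2:ℝ) ^ (-(k:ℤ)) / 4 := by
              have hfle : (k ! : ℝ) ^ (-(n:ℤ)) ≤ 1 := by
                apply zpow_le_one_of_nonpos₀
                · exact_mod_cast k.factorial_pos
                · omega
              have : ρ k ≤ (2:ℝ) ^ (-(k:ℤ) - 2) * 1 := by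
                show (2:ℝ) ^ (-(k:ℤ) - 2) * (k ! : ℝ) ^ (-(n:ℤ)) ≤ _
                exact mul_le_mul_of_nonneg_left hfle (by positivity)
              rw [mul_one] at this
              refine le_trans this (le_of_eq ?_)
              rw [zpow_sub₀ (by norm_num : (2:ℝ) ≠ 0)]
              norm_num
            have h4 : (0:ℝ) < (2:ℝ) ^ (-(k:ℤ)) := by positivity
            linarith
          rw [hempty]
          simp
      · rw [if_neg hk2]
        simp
    refine le_trans (ENNReal.tsum_le_tsum hterm) (le_of_eq ?_)
    -- Step 3: sum the geometric series
    have h1 : ∀ k : ℕ, ENNReal.ofReal (2 * C * r ^ n / (m ! : ℝ) * (1 / 2) ^ k)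
        = ENNReal.ofReal (2 * C * r ^ n / (m ! : ℝ)) * (ENNReal.ofReal (1 / 2)) ^ k := by
      intro k
      rw [ENNReal.ofReal_mul (by positivity), ENNReal.ofReal_pow (by norm_num)]
    calc ∑' k : ℕ, ENNReal.ofReal (2 * C * r ^ n / (m ! : ℝ) * (1 / 2) ^ k) * ω
        = (∑' k : ℕ, ENNReal.ofReal (2 * C * r ^ n / (m ! : ℝ))
            * (ENNReal.ofReal (1 / 2)) ^ k) * ω := by
          rw [ENNReal.tsum_mul_right]
          congr 1
          exact tsum_congr fun k => by rw [h1]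
      _ = ENNReal.ofReal (2 * C * r ^ n / (m ! : ℝ)) * (1 - ENNReal.ofReal (1 / 2))⁻¹ * ω := by
          rw [ENNReal.tsum_mul_left, ENNReal.tsum_geometric]
      _ = ENNReal.ofReal (2 * C * r ^ n / (m ! : ℝ)) * 2 * ω := by
          congr 2
          have : ENNReal.ofReal (1 / 2 : ℝ) = 2⁻¹ := by
            rw [ENNReal.ofReal_div_of_pos (by norm_num)]
            simp
          rw [this, ENNReal.one_sub_inv_two]
          simp
      _ = ENNReal.ofReal (4 * C / (m ! : ℝ)) * (ENNReal.ofReal (r ^ n) * ω) := by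
          rw [← mul_assoc]
          congr 1
          rw [show (2:ENNReal) = ENNReal.ofReal 2 by simp [ENNReal.ofReal_ofNat],
            ← ENNReal.ofReal_mul (by positivity), ← ENNReal.ofReal_mul (by positivity)]
          congr 1
          field_simp
          ring
      _ = ENNReal.ofReal (4 * C / (m ! : ℝ)) * volume (ball z r) := by
          rw [Measure.addHaar_ball _ _ hr0.le, hfr]
  calc volume (D ∩ ball z r) / volume (ball z r)
      ≤ ENNReal.ofReal (4 * C / (m ! : ℝ)) := ENNReal.div_le_of_le_mul key
    _ ≤ ε := hm.le
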